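/- In the mod 2 cellular chain complex of the CW-complex structure on the space of trinitary algebras of codimension 4 in C^∞(S^1,ℝ), the first homology group H_1 is isomorphic to ℤ/2 and is generated by the class of the 1-cell Θ̄. -/

import Mathlib

abbrev Ch (ι : Type) := ι → ZMod 2

/-- basis chain corresponding to a single cell -/
def ee {ι : Type} [DecidableEq ι] (i : ι) : Ch ι := Pi.single i 1

/-- the ℤ/2-linear boundary map determined by its values on cells -/
def mkBd {ι κ : Type} [Fintype ι] (d : ι → Ch κ) : Ch ι →ₗ[ZMod 2] Ch κ where
  toFun f := ∑ i, f i • d i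
  map_add' x y := by simp [add_smul, Finset.sum_add_distrib]
  map_smul' c x := by simp [Finset.smul_sum, smul_smul]

inductive Cells1
  | Yb1
  | Yb2
  | Ub1
  | Ub2
  | Zb
  | Thb
  | Nab
  deriving DecidableEq

instance : Fintype Cells1 :=
  Fintype.ofList [.Yb1, .Yb2, .Ub1, .Ub2, .Zb, .Thb, .Nab] (fun x => by cases x <;> simp)

inductive Cells2
  | Y1
  | Y2
  | U1
  | U2
  | Z
  | Th
  | Lb123
  | Lb231
  | Lb312
  | Lb132
  | Lb213
  | Lb321
  | Mb1
  | Mb2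
  | Mb3
  | Nb1
  | Nb2
  | Nb3
  | Pb1
  | Pb2
  | Sb1
  | Sb2
  | Xbp
  | Xbm
  | Vb1p
  | Vb2p
  | Vb1m
  | Vb2m
  | Omb
  deriving DecidableEq

instance : Fintype Cells2 :=
  Fintype.ofList [.Y1, .Y2, .U1, .U2, .Z, .Th, .Lb123, .Lb231, .Lb312, .Lb132, .Lb213, .Lb321, .Mb1, .Mb2, .Mb3, .Nb1, .Nb2, .Nb3, .Pb1, .Pb2, .Sb1, .Sb2, .Xbp, .Xbm, .Vb1p, .Vb2p, .Vb1m, .Vb2m, .Omb] (fun x => by cases x <;> simp)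

/-- boundary values on cells -/
def d2 : Cells2 → Ch Cells1
  | .Y1 => ee Cells1.Nab + ee Cells1.Yb1 + ee Cells1.Yb2
  | .Y2 => ee Cells1.Nab + ee Cells1.Yb2 + ee Cells1.Yb1
  | .U1 => ee Cells1.Nab + ee Cells1.Ub1 + ee Cells1.Ub2
  | .U2 => ee Cells1.Nab + ee Cells1.Ub2 + ee Cells1.Ub1
  | .Z => ee Cells1.Nab
  | .Th => 0
  | .Lb123 => ee Cells1.Ub1 + ee Cells1.Zb + ee Cells1.Yb2
  | .Lb231 => ee Cells1.Yb1 + ee Cells1.Ub2 + ee Cells1.Zb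
  | .Lb312 => ee Cells1.Zb + ee Cells1.Yb2 + ee Cells1.Ub2
  | .Lb132 => ee Cells1.Yb1 + ee Cells1.Zb + ee Cells1.Ub2
  | .Lb213 => ee Cells1.Ub1 + ee Cells1.Yb2 + ee Cells1.Zb
  | .Lb321 => ee Cells1.Zb + ee Cells1.Ub2 + ee Cells1.Yb2
  | .Mb1 => ee Cells1.Ub1 + ee Cells1.Yb1 + ee Cells1.Ub2
  | .Mb2 => ee Cells1.Ub1 + ee Cells1.Ub2 + ee Cells1.Yb1
  | .Mb3 => ee Cells1.Yb2
  | .Nb1 => ee Cells1.Yb1 + ee Cells1.Ub2 + ee Cells1.Yb2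
  | .Nb2 => ee Cells1.Yb1 + ee Cells1.Yb2 + ee Cells1.Ub2
  | .Nb3 => ee Cells1.Ub1
  | .Pb1 => 0
  | .Pb2 => 0
  | .Sb1 => 0
  | .Sb2 => 0
  | .Xbp => ee Cells1.Yb1 + ee Cells1.Yb2
  | .Xbm => ee Cells1.Yb1 + ee Cells1.Yb2
  | .Vb1p => ee Cells1.Yb1 + ee Cells1.Ub1
  | .Vb2p => ee Cells1.Yb2 + ee Cells1.Ub2
  | .Vb1m => ee Cells1.Yb1 + ee Cells1.Ub1
  | .Vb2m => ee Cells1.Yb2 + ee Cells1.Ub2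
  | .Omb => 0

/-- the boundary operator -/
def bd2 : Ch Cells2 →ₗ[ZMod 2] Ch Cells1 := mkBd d2


section Aux

/-- section: preimages of the six killed 1-cells -/
def s1 : Cells1 → Ch Cells2
  | .Yb1 => ee Cells2.Xbp + ee Cells2.Mb3
  | .Yb2 => ee Cells2.Mb3
  | .Ub1 => ee Cells2.Nb3
  | .Ub2 => ee Cells2.Vb2p + ee Cells2.Mb3
  | .Zb  => ee Cells2.Lb123 + ee Cells2.Nb3 + ee Cells2.Mb3
  | .Nab => ee Cells2.Z
  | .Thb => 0

lemma bd2_s1 : ∀ i, bd2 (s1 i) = if i = Cells1.Thb then 0 else ee i := by decide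

lemma d2_Thb : ∀ i, d2 i Cells1.Thb = 0 := by decide

lemma mem_range_of_Thb_eq_zero (f : Ch Cells1) (h : f Cells1.Thb = 0) :
    f ∈ LinearMap.range bd2 := by
  refine ⟨mkBd s1 f, ?_⟩
  have hf : f = ∑ i, f i • ee i := by
    funext j
    simp [ee, Pi.single_apply, Finset.sum_apply, Finset.sum_ite_eq, mul_comm]
  rw [show mkBd s1 f = ∑ i, f i • s1 i from rfl, map_sum]
  simp_rw [map_smul, bd2_s1]
  conv_rhs => rw [hf]
  refine Finset.sum_congr rfl fun i _ => ?_
  by_cases hi : i = Cells1.Thb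
  · subst hi; simp [h]
  · simp [hi]

lemma Thb_eq_zero_of_mem_range (f : Ch Cells1) (h : f ∈ LinearMap.range bd2) :
    f Cells1.Thb = 0 := by
  obtain ⟨g, rfl⟩ := h
  show (∑ i, g i • d2 i) Cells1.Thb = 0
  simp [Finset.sum_apply, d2_Thb]

end Aux

/-- H₁ of the mod 2 cellular chain complex of `\overline{TD}_2(S¹)` is ℤ/2,
generated by the class of the 1-cell Θ̄.  (∂₁ = 0, so H₁ = C₁ / im ∂₂.) -/
theorem H1_of_TD2_is_Z2 :
    Nonempty ((Ch Cells1 ⧸ LinearMap.range bd2) ≃ₗ[ZMod 2] ZMod 2) ∧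
    Submodule.span (ZMod 2)
      {(Submodule.Quotient.mk (ee Cells1.Thb) :
          Ch Cells1 ⧸ LinearMap.range bd2)} = ⊤ := by
  have hker : LinearMap.ker (LinearMap.proj (R := ZMod 2) (φ := fun _ : Cells1 => ZMod 2) Cells1.Thb) = LinearMap.range bd2 := by
    ext f
    constructor
    · exact fun h => mem_range_of_Thb_eq_zero f h
    · exact fun h => Thb_eq_zero_of_mem_range f h
  constructor
  · refine ⟨?_⟩
    have hsurj : Function.Surjective (LinearMap.proj (R := ZMod 2) (φ := fun _ : Cells1 => ZMod 2) Cells1.Thb) := by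
      intro c; exact ⟨fun _ => c, rfl⟩
    have e := (LinearMap.proj (R := ZMod 2) (φ := fun _ : Cells1 => ZMod 2) Cells1.Thb).quotKerEquivOfSurjective hsurj
    rw [hker] at e
    exact e
  · rw [eq_top_iff]
    rintro x -
    obtain ⟨f, rfl⟩ := Submodule.Quotient.mk_surjective _ x
    rw [Submodule.mem_span_singleton]
    refine ⟨f Cells1.Thb, ?_⟩
    rw [← Submodule.Quotient.mk_smul, Submodule.Quotient.eq]
    apply mem_range_of_Thb_eq_zero
    simp [ee, Pi.single_apply, sub_eq_add_neg]
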